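/- Consider a GAM g over boolean threshold features including a sometimes-missing boolean feature b, and an affine imputation model p(x_{−b}) = a·(s(x_{−b}) − s_min)/(s_max − s_min) + d where s is additive in the threshold indicators of the other features. Then for every parameterization β of g there exist M-GAM parameters (β̄, β̄^miss, ᾱ) — consisting of the original coefficients, a missingness-indicator coefficient for feature b, and missingness-interaction coefficients between the indicator of b's missingness and threshold indicators of other features — such that for every input x (with b possibly missing), the M-GAM score equals the imputation-averaged score E[g](x) = p(x_{−b})·g(x^{b+}) + (1 − p(x_{−b}))·g(x^{b−}). -/

import Mathlib

open Finset

/-- Theorem 3.3 of the M-GAM paper: for a GAM `g` over threshold features with a sometimes-missing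
boolean feature `b`, and an affine-in-additive-score imputation probability `p`, there exist
M-GAM parameters (a missingness-indicator coefficient `βmiss` for `b` and missingness-interaction
coefficients `α` between `b`'s missingness and threshold indicators of the other features) such
that on every input (with `b` possibly missing, encoded as `none`), the M-GAM score equals the
imputation-averaged score `p·g(x^{b+}) + (1−p)·g(x^{b−})` (which is `g(x)` when `b` is
observed). By convention, a threshold indicator of a missing value evaluates to `0`. -/
theorem stmt13 (d : ℕ) (b : Fin d) (len : Fin d → ℕ)
    (t : (j : Fin d) → Fin (len j) → ℝ)
    (β0 βb : ℝ) (β : (j : Fin d) → Fin (len j) → ℝ)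
    (g : (Fin d → ℝ) → ℝ)
    (hg : ∀ x : Fin d → ℝ, g x =
      β0 + (∑ j ∈ Finset.univ.erase b, ∑ k, β j k * (if x j ≤ t j k then (1 : ℝ) else 0))
        + βb * x b)
    (C : (j : Fin d) → Fin (len j) → ℝ)
    (s : (Fin d → ℝ) → ℝ)
    (hs : ∀ x : Fin d → ℝ, s x =
      ∑ j ∈ Finset.univ.erase b, ∑ k, C j k * (if x j ≤ t j k then (1 : ℝ) else 0))
    (a dd smin smax : ℝ) (hminmax : smin < smax)
    (p : (Fin d → ℝ) → ℝ)
    (hp : ∀ x, p x = a * (s x - smin) / (smax - smin) + dd) :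
    ∃ (βmiss : ℝ) (α : (j : Fin d) → Fin (len j) → ℝ),
      ∀ x : Fin d → Option ℝ, (∀ j : Fin d, j ≠ b → (x j).isSome) →
        (β0
          + (∑ j ∈ Finset.univ.erase b, ∑ k, β j k *
              (if (x j).getD 0 ≤ t j k then (1 : ℝ) else 0))
          + βb * (x b).getD 0
          + βmiss * (if x b = none then (1 : ℝ) else 0)
          + ∑ j ∈ Finset.univ.erase b, ∑ k, α j k * (if x b = none then (1 : ℝ) else 0) *
              (if (x j).getD 0 ≤ t j k then (1 : ℝ) else 0)) =
        if x b = none then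
          p (fun j => (x j).getD 0) * g (Function.update (fun j => (x j).getD 0) b 1)
            + (1 - p (fun j => (x j).getD 0)) * g (Function.update (fun j => (x j).getD 0) b 0)
        else g (fun j => (x j).getD 0) := by
  have hne : smax - smin ≠ 0 := sub_ne_zero.mpr (ne_of_gt hminmax)
  refine ⟨βb * (dd - a * smin / (smax - smin)),
    fun j k => βb * (a * C j k / (smax - smin)), fun x hx => ?_⟩
  set y : Fin d → ℝ := fun j => (x j).getD 0 with hy
  have hyj : ∀ j, (x j).getD 0 = y j := fun _ => rfl
  have hupd : ∀ (c : ℝ), ∀ j ∈ Finset.univ.erase b,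
      (∑ k, β j k * (if Function.update y b c j ≤ t j k then (1 : ℝ) else 0))
      = ∑ k, β j k * (if y j ≤ t j k then (1 : ℝ) else 0) := by
    intro c j hj
    rw [Function.update_of_ne (Finset.mem_erase.mp hj).1]
  by_cases hb : x b = none
  · have hyb : y b = 0 := by simp [hy, hb]
    simp only [hb, if_pos, if_true, mul_one, hyj, hyb, mul_zero, add_zero]
    rw [hg, hg, hp, hs]
    rw [Finset.sum_congr rfl (hupd 1), Finset.sum_congr rfl (hupd 0)]
    simp only [Function.update_self, hyb]
    have hsum : (∑ j ∈ Finset.univ.erase b, ∑ k, (βb * (a * C j k / (smax - smin))) *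
        (if y j ≤ t j k then (1 : ℝ) else 0))
        = (βb * a / (smax - smin)) * ∑ j ∈ Finset.univ.erase b, ∑ k, C j k *
        (if y j ≤ t j k then (1 : ℝ) else 0) := by
      rw [Finset.mul_sum]
      refine Finset.sum_congr rfl fun j _ => ?_
      rw [Finset.mul_sum]
      refine Finset.sum_congr rfl fun k _ => ?_
      field_simp
    rw [hsum]
    field_simp
    rw [Option.getD_none]
    ring
  · rw [if_neg hb]
    simp only [if_neg hb, mul_zero, zero_mul, mul_one, Finset.sum_const_zero, add_zero, hyj]
    rw [hg]
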